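/- Let a, b, c > 0 be reals with a > c > (4/5)a and b > (3/4)c, and let a', b', c' ≥ 0 satisfy b' ≥ √(a'·c'). Then |a - a'| + |b - b'| + |c - c'| ≥ max(0, √(a·c) - b). -/
import Mathlib

private lemma key_sqrt_lip (a c a₂ c₂ : ℝ)
    (ha : 0 < a) (hc : 0 < c) (hac : c < a) (hca : (4 / 5) * a < c)
    (h2a : a / 2 ≤ a₂) (haa : a₂ ≤ a) (h2c : c / 2 ≤ c₂) (hcc : c₂ ≤ c) :
    Real.sqrt (a * c) - Real.sqrt (a₂ * c₂) ≤ (a - a₂) + (c - c₂) := by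
  have ha₂ : 0 ≤ a₂ := le_trans (by linarith) h2a
  have hc₂ : 0 ≤ c₂ := le_trans (by linarith) h2c
  rw [Real.sqrt_mul ha.le, Real.sqrt_mul ha₂]
  set s := Real.sqrt a with hs
  set t := Real.sqrt c with ht
  set s₂ := Real.sqrt a₂ with hs₂
  set t₂ := Real.sqrt c₂ with ht₂
  have hs0 : 0 ≤ s := Real.sqrt_nonneg a
  have ht0 : 0 ≤ t := Real.sqrt_nonneg c
  have hs₂0 : 0 ≤ s₂ := Real.sqrt_nonneg a₂
  have ht₂0 : 0 ≤ t₂ := Real.sqrt_nonneg c₂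
  have hsq : s ^ 2 = a := Real.sq_sqrt ha.le
  have htq : t ^ 2 = c := Real.sq_sqrt hc.le
  have hs₂q : s₂ ^ 2 = a₂ := Real.sq_sqrt ha₂
  have ht₂q : t₂ ^ 2 = c₂ := Real.sq_sqrt hc₂
  have hts : t ≤ s := Real.sqrt_le_sqrt hac.le
  have hss : s₂ ≤ s := Real.sqrt_le_sqrt haa
  have htt : t₂ ≤ t := Real.sqrt_le_sqrt hcc
  -- s₂ ≤ t + t₂
  have hkey : s₂ ≤ t + t₂ := by
    have hsq2 : s₂ ^ 2 ≤ (t + t₂) ^ 2 := by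
      nlinarith [mul_le_mul_of_nonneg_right htt ht₂0]
    calc s₂ = Real.sqrt (s₂ ^ 2) := (Real.sqrt_sq hs₂0).symm
      _ ≤ Real.sqrt ((t + t₂) ^ 2) := Real.sqrt_le_sqrt hsq2
      _ = t + t₂ := Real.sqrt_sq (by linarith)
  have e1 : t * (s - s₂) ≤ (s + s₂) * (s - s₂) :=
    mul_le_mul_of_nonneg_right (by linarith) (by linarith)
  have e2 : s₂ * (t - t₂) ≤ (t + t₂) * (t - t₂) :=
    mul_le_mul_of_nonneg_right hkey (by linarith)
  nlinarith [e1, e2]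

theorem single_triple_log_concavity_bound (a b c a' b' c' : ℝ)
    (ha : 0 < a) (hb : 0 < b) (hc : 0 < c)
    (hac : c < a) (hca : (4 / 5) * a < c) (hbc : (3 / 4) * c < b)
    (ha' : 0 ≤ a') (hb' : 0 ≤ b') (hc' : 0 ≤ c')
    (hlc : Real.sqrt (a' * c') ≤ b') :
    max 0 (Real.sqrt (a * c) - b) ≤ |a - a'| + |b - b'| + |c - c'| := by
  apply max_le
  · positivity
  have habs_a : 0 ≤ |a - a'| := abs_nonneg _
  have habs_b : 0 ≤ |b - b'| := abs_nonneg _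
  have habs_c : 0 ≤ |c - c'| := abs_nonneg _
  rcases le_or_gt a' (a / 2) with h1 | h1
  · -- Case a' ≤ a/2
    have hs : Real.sqrt (a * c) ≤ a := by
      calc Real.sqrt (a * c) ≤ Real.sqrt (a * a) :=
        Real.sqrt_le_sqrt (by nlinarith)
      _ = a := Real.sqrt_mul_self ha.le
    have : a / 2 ≤ |a - a'| := by
      rw [abs_of_nonneg (by linarith)]; linarith
    nlinarith
  rcases le_or_gt c' (c / 2) with h2 | h2
  · -- Case c' ≤ c/2
    have hs : Real.sqrt (a * c) ≤ (5 / 4) * c := by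
      calc Real.sqrt (a * c) ≤ Real.sqrt (((5 / 4) * c) ^ 2) :=
        Real.sqrt_le_sqrt (by nlinarith)
      _ = (5 / 4) * c := Real.sqrt_sq (by linarith)
    have : c / 2 ≤ |c - c'| := by
      rw [abs_of_nonneg (by linarith)]; linarith
    nlinarith
  · -- Main case
    set a₂ := min a' a with ha₂def
    set c₂ := min c' c with hc₂def
    have ha₂ : 0 ≤ a₂ := le_min ha' ha.le
    have hc₂ : 0 ≤ c₂ := le_min hc' hc.le
    have h2a : a / 2 ≤ a₂ := le_min h1.le (by linarith)
    have h2c : c / 2 ≤ c₂ := le_min h2.le (by linarith)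
    have key := key_sqrt_lip a c a₂ c₂ ha hc hac hca h2a (min_le_right _ _)
      h2c (min_le_right _ _)
    have hmono : Real.sqrt (a₂ * c₂) ≤ Real.sqrt (a' * c') :=
      Real.sqrt_le_sqrt (mul_le_mul (min_le_left _ _) (min_le_left _ _) hc₂ ha')
    have haa : a - a₂ ≤ |a - a'| := by
      rcases min_cases a' a with ⟨h, _⟩ | ⟨h, _⟩
      · rw [ha₂def, h]; exact le_abs_self _
      · rw [ha₂def, h]; simp [habs_a]
    have hcc : c - c₂ ≤ |c - c'| := by
      rcases min_cases c' c with ⟨h, _⟩ | ⟨h, _⟩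
      · rw [hc₂def, h]; exact le_abs_self _
      · rw [hc₂def, h]; simp [habs_c]
    have hbb : b' - b ≤ |b - b'| := by
      have := neg_abs_le (b - b'); linarith [le_abs_self (b - b')]
    linarith
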